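/- Let α > −1/2. Then for every integer k ≥ 1, the Jacobi normalization constant h_k = 2^{2α+1} Γ(k+α+1)² / (k! (2k+2α+1) Γ(k+2α+1)) satisfies (e/π) · (2e)^{2α+1} / ((3/2)^{3/2} (3/2+2α)^{3/2+2α}) · 1/(2k+2α+1) ≤ h_k ≤ (π/e) · (2/e)^{2α+1} · (3/2)^{3/2} (3/2+2α)^{3/2+2α} / (2k+2α+1). -/

import Mathlib

open Real

lemma exp_rat_le_of_pow {m n : ℕ} {q : ℝ} (hn : 0 < n) (hq : 0 < q)
    (h : (2.7182818286 : ℝ) ^ m ≤ q ^ n) : Real.exp ((m : ℝ) / n) ≤ q := by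
  have h1 : Real.exp ((m : ℝ) / n) ^ n = Real.exp m := by
    rw [← Real.exp_nat_mul]
    congr 1
    field_simp
  have h2 : Real.exp (m : ℝ) ≤ (2.7182818286 : ℝ) ^ m := by
    calc Real.exp (m : ℝ) = Real.exp 1 ^ m := by rw [← Real.exp_nat_mul]; norm_num
    _ ≤ (2.7182818286 : ℝ) ^ m := by
        apply pow_le_pow_left₀ (Real.exp_pos 1).le (Real.exp_one_lt_d9.le)
  have h3 : Real.exp ((m : ℝ) / n) ^ n ≤ q ^ n := by
    rw [h1]; exact h2.trans h
  exact le_of_pow_le_pow_left₀ hn.ne' hq.le h3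

lemma rat_le_exp_of_pow {m n : ℕ} {q : ℝ} (hn : 0 < n) (hq : 0 < q)
    (h : q ^ n ≤ (2.7182818283 : ℝ) ^ m) : q ≤ Real.exp ((m : ℝ) / n) := by
  have h1 : Real.exp ((m : ℝ) / n) ^ n = Real.exp m := by
    rw [← Real.exp_nat_mul]; congr 1; field_simp
  have h2 : (2.7182818283 : ℝ) ^ m ≤ Real.exp (m : ℝ) := by
    calc (2.7182818283 : ℝ) ^ m ≤ Real.exp 1 ^ m := by
          apply pow_le_pow_left₀ (by norm_num) Real.exp_one_gt_d9.le
    _ = Real.exp (m : ℝ) := by rw [← Real.exp_nat_mul]; norm_num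
  refine le_of_pow_le_pow_left₀ hn.ne' (Real.exp_pos _).le ?_
  rw [h1]; exact h.trans h2

lemma log3_lb : (1.09 : ℝ) ≤ Real.log 3 := by
  rw [show (1.09:ℝ) = (109:ℕ)/(100:ℕ) by norm_num, Real.le_log_iff_exp_le (by norm_num : (0:ℝ) < 3)]
  · exact exp_rat_le_of_pow (by norm_num) (by norm_num) (by norm_num)

lemma log3_ub : Real.log 3 ≤ 1.1 := by
  rw [show (1.1:ℝ) = (11:ℕ)/(10:ℕ) by norm_num, Real.log_le_iff_le_exp (by norm_num)]
  exact rat_le_exp_of_pow (by norm_num) (by norm_num) (by norm_num)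

lemma logpi_lb : (8:ℝ)/7 ≤ Real.log π := by
  rw [show (8:ℝ)/7 = (8:ℕ)/(7:ℕ) by norm_num, Real.le_log_iff_exp_le pi_pos]
  refine exp_rat_le_of_pow (by norm_num) pi_pos ?_
  calc (2.7182818286:ℝ)^(8:ℕ) ≤ 3.141592 ^ (7:ℕ) := by norm_num
  _ ≤ π ^ (7:ℕ) := by gcongr; exact Real.pi_gt_d6.le
open Real

-- log x ≥ 1 - 1/x for x > 0
lemma log_ge_one_sub_inv {x : ℝ} (hx : 0 < x) : 1 - 1/x ≤ Real.log x := by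
  have h := Real.log_le_sub_one_of_pos (show (0:ℝ) < 1/x by positivity)
  rw [Real.log_div one_ne_zero hx.ne'] at h
  simp at h
  rw [one_div]
  linarith

-- tangent bound for t log t at a
lemma mul_log_tangent {t a : ℝ} (ht : 0 < t) (ha : 0 < a) :
    t * (1 + Real.log a) - a ≤ t * Real.log t := by
  have h : 1 - a/t ≤ Real.log (t/a) := by
    have := log_ge_one_sub_inv (show (0:ℝ) < t/a by positivity)
    have e : 1/(t/a) = a/t := by field_simp
    rwa [e] at this
  rw [Real.log_div ht.ne' ha.ne'] at h
  have : t * (1 - a/t) ≤ t * (Real.log t - Real.log a) := by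
    exact mul_le_mul_of_nonneg_left h ht.le
  have e2 : t * (1 - a/t) = t - a := by field_simp
  rw [e2] at this
  nlinarith

noncomputable def Hf (t : ℝ) : ℝ :=
  t * Real.log t - t * (1 + Real.log 2) + Real.log (2*t+1) + Real.log (2*t+3)
    - (1/2) * Real.log (2*t+5)
    + ((3/2) * Real.log π + (3/2) * Real.log (3/2) - 1/2 - (5/2) * Real.log 2)

noncomputable def Hf' (t : ℝ) : ℝ :=
  Real.log t - Real.log 2 + 2/(2*t+1) + 2/(2*t+3) - 1/(2*t+5)

lemma hasDerivAt_Hf {t : ℝ} (ht : 0 < t) : HasDerivAt Hf (Hf' t) t := by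
  have h1 : (0:ℝ) < 2*t+1 := by linarith
  have h3 : (0:ℝ) < 2*t+3 := by linarith
  have h5 : (0:ℝ) < 2*t+5 := by linarith
  have d1 : HasDerivAt (fun x : ℝ => x * Real.log x) (Real.log t + 1) t :=
    Real.hasDerivAt_mul_log ht.ne'
  have d2 : HasDerivAt (fun x : ℝ => x * (1 + Real.log 2)) (1 + Real.log 2) t := by
    simpa using (hasDerivAt_id t).mul_const (1 + Real.log 2)
  have a1 : HasDerivAt (fun x : ℝ => 2*x+1) 2 t := by
    simpa using ((hasDerivAt_id t).const_mul 2).add_const 1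
  have a3 : HasDerivAt (fun x : ℝ => 2*x+3) 2 t := by
    simpa using ((hasDerivAt_id t).const_mul 2).add_const 3
  have a5 : HasDerivAt (fun x : ℝ => 2*x+5) 2 t := by
    simpa using ((hasDerivAt_id t).const_mul 2).add_const 5
  have d3 : HasDerivAt (fun x : ℝ => Real.log (2*x+1)) (2/(2*t+1)) t := by
    simpa [div_eq_mul_inv, mul_comm] using a1.log h1.ne'
  have d4 : HasDerivAt (fun x : ℝ => Real.log (2*x+3)) (2/(2*t+3)) t := by
    simpa [div_eq_mul_inv, mul_comm] using a3.log h3.ne'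
  have d5 : HasDerivAt (fun x : ℝ => (1/2) * Real.log (2*x+5)) ((1/2)*(2/(2*t+5))) t := by
    exact (a5.log h5.ne').const_mul (1/2)
  have := ((((d1.sub d2).add d3).add d4).sub d5).add_const
      ((3/2) * Real.log π + (3/2) * Real.log (3/2) - 1/2 - (5/2) * Real.log 2)
  refine this.congr_deriv ?_
  unfold Hf'
  ring

lemma hasDerivAt_Hf' {t : ℝ} (ht : 0 < t) :
    HasDerivAt Hf' (1/t - 4/(2*t+1)^2 - 4/(2*t+3)^2 + 2/(2*t+5)^2) t := by
  have h1 : (0:ℝ) < 2*t+1 := by linarith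
  have h3 : (0:ℝ) < 2*t+3 := by linarith
  have h5 : (0:ℝ) < 2*t+5 := by linarith
  have d0 : HasDerivAt Real.log (1/t) t := by
    simpa [one_div] using Real.hasDerivAt_log ht.ne'
  have a1 : HasDerivAt (fun x : ℝ => 2*x+1) 2 t := by
    simpa using ((hasDerivAt_id t).const_mul 2).add_const 1
  have a3 : HasDerivAt (fun x : ℝ => 2*x+3) 2 t := by
    simpa using ((hasDerivAt_id t).const_mul 2).add_const 3
  have a5 : HasDerivAt (fun x : ℝ => 2*x+5) 2 t := by
    simpa using ((hasDerivAt_id t).const_mul 2).add_const 5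
  have d1 : HasDerivAt (fun x : ℝ => 2/(2*x+1)) (-(4/(2*t+1)^2)) t := by
    have := (a1.inv h1.ne').const_mul 2
    refine this.congr_deriv ?_
    field_simp
    ring
  have d3 : HasDerivAt (fun x : ℝ => 2/(2*x+3)) (-(4/(2*t+3)^2)) t := by
    have := (a3.inv h3.ne').const_mul 2
    refine this.congr_deriv ?_
    field_simp
    ring
  have d5 : HasDerivAt (fun x : ℝ => 1/(2*x+5)) (-(2/(2*t+5)^2)) t := by
    have := a5.inv h5.ne'
    have e : (fun x : ℝ => 1/(2*x+5)) = (fun x : ℝ => 2*x+5)⁻¹ := by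
      funext x; rw [one_div, Pi.inv_apply]
    rw [e]
    refine this.congr_deriv ?_
    rw [neg_div]
  have := (((d0.sub_const (Real.log 2)).add d1).add d3).sub d5
  refine this.congr_deriv ?_
  ring

lemma Hf''_nonneg {t : ℝ} (ht : 0 < t) :
    0 ≤ 1/t - 4/(2*t+1)^2 - 4/(2*t+3)^2 + 2/(2*t+5)^2 := by
  have h1 : (0:ℝ) < 2*t+1 := by linarith
  have h3 : (0:ℝ) < 2*t+3 := by linarith
  have h5 : (0:ℝ) < 2*t+5 := by linarith
  have key : 4/(2*t+1)^2 + 4/(2*t+3)^2 ≤ 1/t := by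
    rw [div_add_div _ _ (by positivity) (by positivity), div_le_div_iff₀ (by positivity) ht]
    nlinarith [sq_nonneg t, pow_pos ht 2, pow_pos ht 3, pow_pos ht 4]
  have h2 : 0 ≤ 2/(2*t+5)^2 := by positivity
  linarith
lemma log2_lb : (6931471803:ℝ)/10^10 < Real.log 2 := by
  have := Real.log_two_gt_d9; norm_num at this ⊢; linarith

lemma log2_ub : Real.log 2 < (6931471808:ℝ)/10^10 := by
  have := Real.log_two_lt_d9; norm_num at this ⊢; linarith

lemma Hf'_mono : MonotoneOn Hf' (Set.Ici (1/2 : ℝ)) := by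
  have hc : ContinuousOn Hf' (Set.Ici (1/2:ℝ)) := by
    intro x hx
    have hx0 : (0:ℝ) < x := lt_of_lt_of_le (by norm_num) hx
    exact (hasDerivAt_Hf' hx0).continuousAt.continuousWithinAt
  refine monotoneOn_of_deriv_nonneg (convex_Ici _) hc ?_ ?_
  · intro x hx
    rw [interior_Ici] at hx
    have hx0 : (0:ℝ) < x := lt_trans (by norm_num) hx
    exact (hasDerivAt_Hf' hx0).differentiableAt.differentiableWithinAt
  · intro x hx
    rw [interior_Ici] at hx
    have hx0 : (0:ℝ) < x := lt_trans (by norm_num) hx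
    rw [(hasDerivAt_Hf' hx0).deriv]
    exact Hf''_nonneg hx0

lemma Hf'_062 : 0 ≤ Hf' (31/50) := by
  unfold Hf'
  have h1 : Real.log (31/50 : ℝ) = Real.log (28/25) + Real.log (31/28) - Real.log 2 := by
    rw [show (31/50:ℝ) = (28/25)*(31/28)/2 by norm_num,
      Real.log_div (by norm_num) (by norm_num), Real.log_mul (by norm_num) (by norm_num)]
  have h2 : (1:ℝ) - 1/(28/25) ≤ Real.log (28/25) := log_ge_one_sub_inv (by norm_num)
  have h3 : (1:ℝ) - 1/(31/28) ≤ Real.log (31/28) := log_ge_one_sub_inv (by norm_num)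
  have hl2 := log2_ub
  rw [h1]
  norm_num at h2 h3 ⊢
  linarith

lemma Hf'_nonneg {t : ℝ} (ht : 31/50 ≤ t) : 0 ≤ Hf' t := by
  have := Hf'_mono (Set.mem_Ici.2 (by norm_num : (1/2:ℝ) ≤ 31/50))
    (Set.mem_Ici.2 (by linarith : (1/2:ℝ) ≤ t)) ht
  linarith [Hf'_062]

lemma Hf_mono : MonotoneOn Hf (Set.Ici (31/50 : ℝ)) := by
  have hc : ContinuousOn Hf (Set.Ici (31/50:ℝ)) := by
    intro x hx
    have hx0 : (0:ℝ) < x := lt_of_lt_of_le (by norm_num) hx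
    exact (hasDerivAt_Hf hx0).continuousAt.continuousWithinAt
  refine monotoneOn_of_deriv_nonneg (convex_Ici _) hc ?_ ?_
  · intro x hx
    rw [interior_Ici] at hx
    have hx0 : (0:ℝ) < x := lt_trans (by norm_num) hx
    exact (hasDerivAt_Hf hx0).differentiableAt.differentiableWithinAt
  · intro x hx
    rw [interior_Ici] at hx
    have hx0 : (0:ℝ) < x := lt_trans (by norm_num) hx
    rw [(hasDerivAt_Hf hx0).deriv]
    exact Hf'_nonneg hx.le

lemma Hf_crude {t : ℝ} (h1 : 1/2 ≤ t) (h2 : t ≤ 31/50) : 0 ≤ Hf t := by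
  unfold Hf
  have ht0 : (0:ℝ) < t := by linarith
  have hl2l := log2_lb
  have hl2u := log2_ub
  have hl3l := log3_lb
  have hl3u := log3_ub
  have hpil := logpi_lb
  have ha : t * (1 + Real.log (1/2)) - 1/2 ≤ t * Real.log t := mul_log_tangent ht0 (by norm_num)
  rw [Real.log_div one_ne_zero (by norm_num), Real.log_one] at ha
  have hb : Real.log 2 + (2*t-1)/(56/25) ≤ Real.log (2*t+1) := by
    have h := log_ge_one_sub_inv (show (0:ℝ) < (2*t+1)/2 by linarith)
    rw [Real.log_div (by linarith) (by norm_num)] at h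
    have e : 1/((2*t+1)/2) = 2/(2*t+1) := by field_simp
    rw [e] at h
    have e2 : (2*t-1)/(56/25) ≤ 1 - 2/(2*t+1) := by
      rw [show (1:ℝ) - 2/(2*t+1) = (2*t-1)/(2*t+1) by field_simp; ring]
      rw [div_le_div_iff₀ (by norm_num) (by linarith)]
      nlinarith
    linarith
  have hc : 2 * Real.log 2 + (2*t-1)/(106/25) ≤ Real.log (2*t+3) := by
    have h := log_ge_one_sub_inv (show (0:ℝ) < (2*t+3)/4 by linarith)
    rw [Real.log_div (by linarith) (by norm_num),
      show (4:ℝ) = 2^2 by norm_num, Real.log_pow] at h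
    have e : 1/((2*t+3)/2^2) = 4/(2*t+3) := by rw [one_div_div]; norm_num
    rw [e] at h
    push_cast at h
    have e2 : (2*t-1)/(106/25) ≤ 1 - 4/(2*t+3) := by
      rw [show (1:ℝ) - 4/(2*t+3) = (2*t-1)/(2*t+3) by field_simp; ring]
      rw [div_le_div_iff₀ (by norm_num) (by linarith)]
      nlinarith
    linarith
  have hd : Real.log (2*t+5) ≤ Real.log 2 + Real.log 3 + (2*t-1)/6 := by
    have h := Real.log_le_sub_one_of_pos (show (0:ℝ) < (2*t+5)/6 by linarith)
    rw [Real.log_div (by linarith) (by norm_num)] at h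
    have h6 : Real.log 6 = Real.log 2 + Real.log 3 := by
      rw [show (6:ℝ) = 2*3 by norm_num, Real.log_mul (by norm_num) (by norm_num)]
    rw [h6] at h
    linarith
  have hlog32 : Real.log (3/2) = Real.log 3 - Real.log 2 := Real.log_div (by norm_num) (by norm_num)
  rw [hlog32]
  have hprod : (2*t-1) * Real.log 2 ≤ (2*t-1) * ((6931471808:ℝ)/10^10) :=
    mul_le_mul_of_nonneg_left hl2u.le (by linarith)
  nlinarith [hprod, ha, hb, hc, hd]

lemma Hf_nonneg {t : ℝ} (ht : 1/2 ≤ t) : 0 ≤ Hf t := by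
  rcases le_or_gt t (31/50) with h | h
  · exact Hf_crude ht h
  · have := Hf_mono (Set.mem_Ici.2 le_rfl) (Set.mem_Ici.2 h.le) h.le
    have base := Hf_crude (by norm_num : (1/2:ℝ) ≤ 31/50) le_rfl
    linarith
lemma gamma_mid {x y : ℝ} (hx : 0 < x) (hy : 0 < y) :
    Real.Gamma ((x+y)/2) ^ 2 ≤ Real.Gamma x * Real.Gamma y := by
  have h := Real.Gamma_mul_add_mul_le_rpow_Gamma_mul_rpow_Gamma hx hy
    (by norm_num : (0:ℝ) < 1/2) (by norm_num : (0:ℝ) < 1/2) (by norm_num)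
  have hG : Real.Gamma ((x+y)/2) ≤ Real.Gamma x ^ ((1:ℝ)/2) * Real.Gamma y ^ ((1:ℝ)/2) := by
    convert h using 2
    ring
  have hpos : 0 < Real.Gamma ((x+y)/2) := Real.Gamma_pos_of_pos (by linarith)
  calc Real.Gamma ((x+y)/2) ^ 2
      ≤ (Real.Gamma x ^ ((1:ℝ)/2) * Real.Gamma y ^ ((1:ℝ)/2)) ^ 2 := by
        apply pow_le_pow_left₀ hpos.le hG
    _ = Real.Gamma x * Real.Gamma y := by
        rw [mul_pow, ← Real.rpow_natCast (Real.Gamma x ^ ((1:ℝ)/2)) 2,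
          ← Real.rpow_natCast (Real.Gamma y ^ ((1:ℝ)/2)) 2,
          ← Real.rpow_mul (Real.Gamma_pos_of_pos hx).le,
          ← Real.rpow_mul (Real.Gamma_pos_of_pos hy).le]
        norm_num
noncomputable def qf (α : ℝ) (k : ℕ) : ℝ :=
  2 ^ (2*α+1) * Real.Gamma ((k:ℝ)+α+1) ^ 2 / ((k.factorial : ℝ) * Real.Gamma ((k:ℝ)+2*α+1))

section qlemmas
variable {α : ℝ} (hα : -(1:ℝ)/2 < α)

include hα

lemma qf_pos (k : ℕ) : 0 < qf α k := by
  have h1 : (0:ℝ) < (k:ℝ)+α+1 := by have : (0:ℝ) ≤ (k:ℝ) := Nat.cast_nonneg k; linarith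
  have h2 : (0:ℝ) < (k:ℝ)+2*α+1 := by have : (0:ℝ) ≤ (k:ℝ) := Nat.cast_nonneg k; linarith
  have g1 := Real.Gamma_pos_of_pos h1
  have g2 := Real.Gamma_pos_of_pos h2
  have hf : (0:ℝ) < (k.factorial : ℝ) := by exact_mod_cast k.factorial_pos
  unfold qf
  positivity

lemma qf_succ (k : ℕ) :
    qf α (k+1) = qf α k * (((k:ℝ)+α+1)^2 / (((k:ℝ)+1) * ((k:ℝ)+2*α+1))) := by
  have h1 : (0:ℝ) < (k:ℝ)+α+1 := by have : (0:ℝ) ≤ (k:ℝ) := Nat.cast_nonneg k; linarith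
  have h2 : (0:ℝ) < (k:ℝ)+2*α+1 := by have : (0:ℝ) ≤ (k:ℝ) := Nat.cast_nonneg k; linarith
  have e1 : Real.Gamma (((k+1:ℕ):ℝ)+α+1) = ((k:ℝ)+α+1) * Real.Gamma ((k:ℝ)+α+1) := by
    push_cast
    rw [show (k:ℝ)+1+α+1 = ((k:ℝ)+α+1)+1 by ring, Real.Gamma_add_one h1.ne']
  have e2 : Real.Gamma (((k+1:ℕ):ℝ)+2*α+1) = ((k:ℝ)+2*α+1) * Real.Gamma ((k:ℝ)+2*α+1) := by
    push_cast
    rw [show (k:ℝ)+1+2*α+1 = ((k:ℝ)+2*α+1)+1 by ring, Real.Gamma_add_one h2.ne']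
  have e3 : ((k+1).factorial : ℝ) = ((k:ℝ)+1) * (k.factorial : ℝ) := by
    rw [Nat.factorial_succ]; push_cast; ring
  have hf : (0:ℝ) < (k.factorial : ℝ) := by exact_mod_cast k.factorial_pos
  have hg2 : (0:ℝ) < Real.Gamma ((k:ℝ)+2*α+1) := Real.Gamma_pos_of_pos h2
  have hk1 : (0:ℝ) < (k:ℝ)+1 := by have : (0:ℝ) ≤ (k:ℝ) := Nat.cast_nonneg k; linarith
  unfold qf
  rw [e1, e2, e3]
  field_simp

lemma qf_ge (k : ℕ) (hk : 1 ≤ k) : qf α 1 ≤ qf α k := by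
  induction k with
  | zero => omega
  | succ n ih =>
    rcases Nat.eq_zero_or_pos n with hn | hn
    · subst hn; norm_num
    have step : qf α n ≤ qf α (n+1) := by
      rw [qf_succ hα n]
      have h1 : (0:ℝ) < (n:ℝ)+α+1 := by have : (0:ℝ) ≤ (n:ℝ) := Nat.cast_nonneg n; linarith
      have hk1 : (0:ℝ) < (n:ℝ)+1 := by have : (0:ℝ) ≤ (n:ℝ) := Nat.cast_nonneg n; linarith
      have h2 : (0:ℝ) < (n:ℝ)+2*α+1 := by have : (0:ℝ) ≤ (n:ℝ) := Nat.cast_nonneg n; linarith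
      have hfac : 1 ≤ ((n:ℝ)+α+1)^2 / (((n:ℝ)+1) * ((n:ℝ)+2*α+1)) := by
        rw [le_div_iff₀ (by positivity)]
        nlinarith [sq_nonneg α]
      nlinarith [qf_pos hα n]
    exact le_trans (ih hn) step

lemma qf_le (k : ℕ) : qf α k ≤ 2 ^ (2*α+1) := by
  have h1 : (0:ℝ) < (k:ℝ)+1 := by have : (0:ℝ) ≤ (k:ℝ) := Nat.cast_nonneg k; linarith
  have h2 : (0:ℝ) < (k:ℝ)+2*α+1 := by have : (0:ℝ) ≤ (k:ℝ) := Nat.cast_nonneg k; linarith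
  have hmid := gamma_mid h1 h2
  have e : ((k:ℝ)+1+((k:ℝ)+2*α+1))/2 = (k:ℝ)+α+1 := by ring
  rw [e] at hmid
  have efac : Real.Gamma ((k:ℝ)+1) = (k.factorial : ℝ) := by
    exact_mod_cast Real.Gamma_nat_eq_factorial k
  rw [efac] at hmid
  have hg2 : (0:ℝ) < Real.Gamma ((k:ℝ)+2*α+1) := Real.Gamma_pos_of_pos h2
  have hf : (0:ℝ) < (k.factorial : ℝ) := by exact_mod_cast k.factorial_pos
  have hp : (0:ℝ) < (2:ℝ) ^ (2*α+1) := Real.rpow_pos_of_pos (by norm_num) _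
  unfold qf
  rw [div_le_iff₀ (by positivity)]
  nlinarith

lemma qf_one_eq : qf α 1 = Real.sqrt π * (α+1)^2 * Real.Gamma (α+1) / Real.Gamma (α+3/2) := by
  have hu : (0:ℝ) < α+1 := by linarith
  have hdup := Real.Gamma_mul_Gamma_add_half (α+1)
  rw [show α+1+1/2 = α+3/2 by ring, show 2*(α+1) = 2*α+2 by ring] at hdup
  have hg1 : (0:ℝ) < Real.Gamma (α+1) := Real.Gamma_pos_of_pos hu
  have hg32 : (0:ℝ) < Real.Gamma (α+3/2) := Real.Gamma_pos_of_pos (by linarith)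
  have hg2 : (0:ℝ) < Real.Gamma (2*α+2) := Real.Gamma_pos_of_pos (by linarith)
  have hsπ : (0:ℝ) < Real.sqrt π := Real.sqrt_pos.2 Real.pi_pos
  have hpow2 : (0:ℝ) < (2:ℝ) ^ (2*α+1) := Real.rpow_pos_of_pos (by norm_num) _
  have hpowmul : (2:ℝ) ^ (2*α+1) * (2:ℝ) ^ (1-(2*α+2)) = 1 := by
    rw [← Real.rpow_add (by norm_num : (0:ℝ) < 2),
      show 2*α+1+(1-(2*α+2)) = 0 by ring, Real.rpow_zero]
  have hkey : Real.Gamma (α+1) * Real.Gamma (α+3/2) * (2:ℝ)^(2*α+1)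
      = Real.Gamma (2*α+2) * Real.sqrt π := by
    linear_combination (2:ℝ)^(2*α+1) * hdup + Real.Gamma (2*α+2) * Real.sqrt π * hpowmul
  unfold qf
  push_cast
  rw [show ((1:ℝ))+α+1 = (α+1)+1 by ring, Real.Gamma_add_one hu.ne',
    show ((1:ℝ))+2*α+1 = 2*α+2 by ring, Nat.factorial_one]
  rw [div_eq_div_iff (by positivity) hg32.ne']
  push_cast
  linear_combination (α+1)^2 * Real.Gamma (α+1) * hkey

lemma qf_one_ge : Real.sqrt π * (α+1) * (α+3/2) / Real.sqrt (α+2) ≤ qf α 1 := by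
  have hu : (0:ℝ) < α+1 := by linarith
  have h2 : (0:ℝ) < α+2 := by linarith
  have h32 : (0:ℝ) < α+3/2 := by linarith
  have hg1 : (0:ℝ) < Real.Gamma (α+1) := Real.Gamma_pos_of_pos hu
  have hg32 : (0:ℝ) < Real.Gamma (α+3/2) := Real.Gamma_pos_of_pos h32
  have hs2 : (0:ℝ) < Real.sqrt (α+2) := Real.sqrt_pos.2 h2
  have hsπ : (0:ℝ) < Real.sqrt π := Real.sqrt_pos.2 Real.pi_pos
  -- Γ(α+5/2)² ≤ Γ(α+2)Γ(α+3) = (α+2)Γ(α+2)²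
  have hmid := gamma_mid h2 (show (0:ℝ) < α+3 by linarith)
  rw [show (α+2+(α+3))/2 = α+5/2 by ring] at hmid
  have e3 : Real.Gamma (α+3) = (α+2) * Real.Gamma (α+2) := by
    rw [show α+3 = (α+2)+1 by ring, Real.Gamma_add_one h2.ne']
  rw [e3] at hmid
  have hg2 : (0:ℝ) < Real.Gamma (α+2) := Real.Gamma_pos_of_pos h2
  -- Γ(α+5/2) ≤ Γ(α+2) √(α+2)
  have hW : Real.Gamma (α+5/2) ≤ Real.Gamma (α+2) * Real.sqrt (α+2) := by
    have hG52 : (0:ℝ) < Real.Gamma (α+5/2) := Real.Gamma_pos_of_pos (by linarith)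
    have h' := Real.sqrt_le_sqrt hmid
    rw [Real.sqrt_sq hG52.le,
      show Real.Gamma (α+2) * ((α+2) * Real.Gamma (α+2)) = (α+2) * Real.Gamma (α+2)^2 by ring,
      Real.sqrt_mul h2.le, Real.sqrt_sq hg2.le] at h'
    linarith [h']
  -- rewrite Γ(α+5/2) = (α+3/2)Γ(α+3/2), Γ(α+2) = (α+1)Γ(α+1)
  rw [show α+5/2 = (α+3/2)+1 by ring, Real.Gamma_add_one h32.ne'] at hW
  rw [show α+2 = (α+1)+1 by ring, Real.Gamma_add_one hu.ne'] at hW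
  rw [show (α+1)+1 = α+2 by ring] at hW
  -- conclude
  rw [qf_one_eq hα, div_le_div_iff₀ hs2 hg32]
  calc Real.sqrt π * (α+1) * (α+3/2) * Real.Gamma (α+3/2)
      ≤ Real.sqrt π * (α+1) * ((α+1) * Real.Gamma (α+1) * Real.sqrt (α+2)) := by
        nlinarith [hW, mul_pos hsπ hu]
    _ = Real.sqrt π * (α+1)^2 * Real.Gamma (α+1) * Real.sqrt (α+2) := by ring
end qlemmas
lemma const_lower {α : ℝ} (hα : -(1:ℝ)/2 < α) :
    (Real.exp 1 / π) * (2 * Real.exp 1) ^ (2*α+1) /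
      (((3:ℝ)/2) ^ ((3:ℝ)/2) * (3/2+2*α) ^ ((3:ℝ)/2+2*α))
      ≤ Real.sqrt π * (α+1) * (α+3/2) / Real.sqrt (α+2) := by
  have ht0 : (0:ℝ) < 3/2+2*α := by linarith
  have hu : (0:ℝ) < α+1 := by linarith
  have h32 : (0:ℝ) < α+3/2 := by linarith
  have h2 : (0:ℝ) < α+2 := by linarith
  have e1 : Real.exp 1 / π = Real.exp (1 - Real.log π) := by
    rw [Real.exp_sub, Real.exp_log Real.pi_pos]
  have e2 : (2 * Real.exp 1) ^ (2*α+1) = Real.exp ((Real.log 2 + 1) * (2*α+1)) := by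
    rw [Real.rpow_def_of_pos (by positivity)]
    rw [Real.log_mul two_ne_zero (Real.exp_ne_zero 1), Real.log_exp]
  have e3 : ((3:ℝ)/2) ^ ((3:ℝ)/2) = Real.exp (Real.log (3/2) * (3/2)) :=
    Real.rpow_def_of_pos (by norm_num) _
  have e4 : ((3:ℝ)/2+2*α) ^ ((3:ℝ)/2+2*α) = Real.exp (Real.log (3/2+2*α) * (3/2+2*α)) :=
    Real.rpow_def_of_pos ht0 _
  have e5 : Real.sqrt π = Real.exp (Real.log π * (1/2)) := by
    rw [Real.sqrt_eq_rpow, Real.rpow_def_of_pos Real.pi_pos]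
  have e6 : α+1 = Real.exp (Real.log (α+1)) := (Real.exp_log hu).symm
  have e7 : α+3/2 = Real.exp (Real.log (α+3/2)) := (Real.exp_log h32).symm
  have e8 : Real.sqrt (α+2) = Real.exp (Real.log (α+2) * (1/2)) := by
    rw [Real.sqrt_eq_rpow, Real.rpow_def_of_pos h2]
  calc (Real.exp 1 / π) * (2 * Real.exp 1) ^ (2*α+1) /
      (((3:ℝ)/2) ^ ((3:ℝ)/2) * (3/2+2*α) ^ ((3:ℝ)/2+2*α))
      = Real.exp (1 - Real.log π + (Real.log 2 + 1) * (2*α+1)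
          - (Real.log (3/2) * (3/2) + Real.log (3/2+2*α) * (3/2+2*α))) := by
        rw [e1, e2, e3, e4, ← Real.exp_add, ← Real.exp_add, ← Real.exp_sub]
    _ ≤ Real.exp ((Real.log π) * (1/2) + Real.log (α+1) + Real.log (α+3/2)
          - Real.log (α+2) * (1/2)) := by
        rw [Real.exp_le_exp]
        have hHf := Hf_nonneg (t := 3/2+2*α) (by linarith)
        unfold Hf at hHf
        have i1 : Real.log (2*(3/2+2*α)+1) = 2 * Real.log 2 + Real.log (α+1) := by
          rw [show 2*(3/2+2*α)+1 = 2^2*(α+1) by ring,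
            Real.log_mul (by norm_num) hu.ne', Real.log_pow]
          push_cast; ring
        have i2 : Real.log (2*(3/2+2*α)+3) = 2 * Real.log 2 + Real.log (α+3/2) := by
          rw [show 2*(3/2+2*α)+3 = 2^2*(α+3/2) by ring,
            Real.log_mul (by norm_num) h32.ne', Real.log_pow]
          push_cast; ring
        have i3 : Real.log (2*(3/2+2*α)+5) = 2 * Real.log 2 + Real.log (α+2) := by
          rw [show 2*(3/2+2*α)+5 = 2^2*(α+2) by ring,
            Real.log_mul (by norm_num) h2.ne', Real.log_pow]
          push_cast; ring
        rw [i1, i2, i3] at hHf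
        nlinarith [hHf]
    _ = Real.sqrt π * (α+1) * (α+3/2) / Real.sqrt (α+2) := by
        rw [Real.exp_sub, Real.exp_add, Real.exp_add, ← e5, ← e6, ← e7, ← e8]

lemma const_upper {α : ℝ} (hα : -(1:ℝ)/2 < α) :
    (2:ℝ) ^ (2*α+1) ≤ (π / Real.exp 1) * (2 / Real.exp 1) ^ (2*α+1) *
      (((3:ℝ)/2) ^ ((3:ℝ)/2) * (3/2+2*α) ^ ((3:ℝ)/2+2*α)) := by
  have ht0 : (0:ℝ) < 3/2+2*α := by linarith
  have e0 : (2:ℝ) ^ (2*α+1) = Real.exp (Real.log 2 * (2*α+1)) :=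
    Real.rpow_def_of_pos (by norm_num) _
  have e1 : π / Real.exp 1 = Real.exp (Real.log π - 1) := by
    rw [Real.exp_sub, Real.exp_log Real.pi_pos]
  have e2 : (2 / Real.exp 1) ^ (2*α+1) = Real.exp ((Real.log 2 - 1) * (2*α+1)) := by
    rw [Real.rpow_def_of_pos (by positivity)]
    rw [Real.log_div two_ne_zero (Real.exp_ne_zero 1), Real.log_exp]
  have e3 : ((3:ℝ)/2) ^ ((3:ℝ)/2) = Real.exp (Real.log (3/2) * (3/2)) :=
    Real.rpow_def_of_pos (by norm_num) _
  have e4 : ((3:ℝ)/2+2*α) ^ ((3:ℝ)/2+2*α) = Real.exp (Real.log (3/2+2*α) * (3/2+2*α)) :=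
    Real.rpow_def_of_pos ht0 _
  rw [e0, e1, e2, e3, e4, ← Real.exp_add, ← Real.exp_add, ← Real.exp_add, Real.exp_le_exp]
  have htan : (3/2+2*α) * (1 + Real.log 1) - 1 ≤ (3/2+2*α) * Real.log (3/2+2*α) :=
    mul_log_tangent ht0 one_pos
  rw [Real.log_one] at htan
  have hlog32 : Real.log (3/2) = Real.log 3 - Real.log 2 :=
    Real.log_div (by norm_num) (by norm_num)
  have hl2l := log2_lb
  have hl2u := log2_ub
  have hl3l := log3_lb
  have hpil := logpi_lb
  nlinarith [htan]

theorem jacobi_norm_constant_bounds' (α : ℝ) (hα : -(1 : ℝ) / 2 < α) :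
    ∀ k : ℕ, 1 ≤ k →
      (Real.exp 1 / Real.pi) * (2 * Real.exp 1) ^ (2 * α + 1) /
          (((3 : ℝ) / 2) ^ ((3 : ℝ) / 2) * (3 / 2 + 2 * α) ^ ((3 : ℝ) / 2 + 2 * α)) *
          (1 / (2 * (k : ℝ) + 2 * α + 1))
        ≤ 2 ^ (2 * α + 1) * Real.Gamma ((k : ℝ) + α + 1) ^ 2 /
            ((k.factorial : ℝ) * (2 * (k : ℝ) + 2 * α + 1) * Real.Gamma ((k : ℝ) + 2 * α + 1)) ∧
      2 ^ (2 * α + 1) * Real.Gamma ((k : ℝ) + α + 1) ^ 2 /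
          ((k.factorial : ℝ) * (2 * (k : ℝ) + 2 * α + 1) * Real.Gamma ((k : ℝ) + 2 * α + 1))
        ≤ (Real.pi / Real.exp 1) * (2 / Real.exp 1) ^ (2 * α + 1) *
            (((3 : ℝ) / 2) ^ ((3 : ℝ) / 2) * (3 / 2 + 2 * α) ^ ((3 : ℝ) / 2 + 2 * α)) /
            (2 * (k : ℝ) + 2 * α + 1) := by
  intro k hk
  have hkR : (1:ℝ) ≤ (k:ℝ) := by exact_mod_cast hk
  have hden : (0:ℝ) < 2*(k:ℝ)+2*α+1 := by linarith
  have h1 : (0:ℝ) < (k:ℝ)+α+1 := by linarith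
  have h2 : (0:ℝ) < (k:ℝ)+2*α+1 := by linarith
  have hg2 : (0:ℝ) < Real.Gamma ((k:ℝ)+2*α+1) := Real.Gamma_pos_of_pos h2
  have hf : (0:ℝ) < (k.factorial : ℝ) := by exact_mod_cast k.factorial_pos
  have heq : 2 ^ (2*α+1) * Real.Gamma ((k:ℝ)+α+1) ^ 2 /
      ((k.factorial : ℝ) * (2*(k:ℝ)+2*α+1) * Real.Gamma ((k:ℝ)+2*α+1))
      = qf α k * (1 / (2*(k:ℝ)+2*α+1)) := by
    unfold qf
    field_simp
  have hlow : (Real.exp 1 / π) * (2 * Real.exp 1) ^ (2*α+1) /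
      (((3:ℝ)/2) ^ ((3:ℝ)/2) * (3/2+2*α) ^ ((3:ℝ)/2+2*α)) ≤ qf α k :=
    le_trans (le_trans (const_lower hα) (qf_one_ge hα)) (qf_ge hα k hk)
  have hup : qf α k ≤ (π / Real.exp 1) * (2 / Real.exp 1) ^ (2*α+1) *
      (((3:ℝ)/2) ^ ((3:ℝ)/2) * (3/2+2*α) ^ ((3:ℝ)/2+2*α)) :=
    le_trans (qf_le hα k) (const_upper hα)
  constructor
  · rw [heq]
    exact mul_le_mul_of_nonneg_right hlow (by positivity)
  · rw [heq, div_eq_mul_one_div ((π / Real.exp 1) * (2 / Real.exp 1) ^ (2*α+1) *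
      (((3:ℝ)/2) ^ ((3:ℝ)/2) * (3/2+2*α) ^ ((3:ℝ)/2+2*α))) (2*(k:ℝ)+2*α+1)]
    exact mul_le_mul_of_nonneg_right hup (by positivity)

/-- Two-sided bound on the Jacobi normalization constant
`h_k = 2^{2α+1} Γ(k+α+1)² / (k!(2k+2α+1)Γ(k+2α+1))` for `α > -1/2` and `k ≥ 1`:
`(e/π)(2e)^{2α+1}/((3/2)^{3/2}(3/2+2α)^{3/2+2α}) · 1/(2k+2α+1) ≤ h_k
  ≤ (π/e)(2/e)^{2α+1}(3/2)^{3/2}(3/2+2α)^{3/2+2α}/(2k+2α+1)`. -/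
theorem jacobi_norm_constant_bounds (α : ℝ) (hα : -(1 : ℝ) / 2 < α) :
    ∀ k : ℕ, 1 ≤ k →
      (Real.exp 1 / Real.pi) * (2 * Real.exp 1) ^ (2 * α + 1) /
          (((3 : ℝ) / 2) ^ ((3 : ℝ) / 2) * (3 / 2 + 2 * α) ^ ((3 : ℝ) / 2 + 2 * α)) *
          (1 / (2 * (k : ℝ) + 2 * α + 1))
        ≤ 2 ^ (2 * α + 1) * Real.Gamma ((k : ℝ) + α + 1) ^ 2 /
            ((k.factorial : ℝ) * (2 * (k : ℝ) + 2 * α + 1) * Real.Gamma ((k : ℝ) + 2 * α + 1)) ∧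
      2 ^ (2 * α + 1) * Real.Gamma ((k : ℝ) + α + 1) ^ 2 /
          ((k.factorial : ℝ) * (2 * (k : ℝ) + 2 * α + 1) * Real.Gamma ((k : ℝ) + 2 * α + 1))
        ≤ (Real.pi / Real.exp 1) * (2 / Real.exp 1) ^ (2 * α + 1) *
            (((3 : ℝ) / 2) ^ ((3 : ℝ) / 2) * (3 / 2 + 2 * α) ^ ((3 : ℝ) / 2 + 2 * α)) /
            (2 * (k : ℝ) + 2 * α + 1) := by
  exact jacobi_norm_constant_bounds' α hα
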